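/- Let G be a DAG on finite vertex set V with parent sets Ca(·) (interpreted as direct causes), and let i, j ∈ V be such that i is not an ancestor of j and j is not a parent of i and i is not a parent of j. Then Ca(i) ∪ Ca(j) d-separates {i} from {j} in G. -/

import Mathlib

/-- The path `l` has a collider at position `t+1`: both neighboring edges point into it. -/
def ColliderAt {V : Type*} (E : V → V → Prop) (l : List V) (t : ℕ) : Prop :=
  ∃ a w b, l[t]? = some a ∧ l[t+1]? = some w ∧ l[t+2]? = some b ∧ E a w ∧ E b w

/-- The undirected path `l` is blocked by the set `K`: some interior non-collider
vertex lies in `K`, or some collider `w` is such that neither `w` nor any descendant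
of `w` lies in `K`. -/
def Blocked {V : Type*} (E : V → V → Prop) (K : Set V) (l : List V) : Prop :=
  (∃ t w, l[t+1]? = some w ∧ t + 2 < l.length ∧ ¬ ColliderAt E l t ∧ w ∈ K) ∨
  (∃ t w, l[t+1]? = some w ∧ ColliderAt E l t ∧ w ∉ K ∧
    ∀ d, Relation.TransGen E w d → d ∉ K)

/-- `l` is an undirected path from `u` to `v`: a list of distinct vertices starting at
`u`, ending at `v`, with consecutive vertices joined by an edge in either direction. -/
def IsUPath {V : Type*} (E : V → V → Prop) (u v : V) (l : List V) : Prop :=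
  l.Nodup ∧ l.head? = some u ∧ l.getLast? = some v ∧
    l.Chain' (fun a b => E a b ∨ E b a)

/-- `K` d-separates `I` from `J`: every undirected path between a vertex of `I` and a
vertex of `J` is blocked by `K`. -/
def DSep {V : Type*} (E : V → V → Prop) (I J K : Set V) : Prop :=
  ∀ u ∈ I, ∀ v ∈ J, ∀ l : List V, IsUPath E u v l → Blocked E K l


lemma fwd {V : Type*} (E : V → V → Prop) (l : List V) :
    ∀ t (ht : t < l.length), 1 ≤ t →
    (∀ k (hk : k + 1 < l.length), k + 1 ≤ t → E (l[k]'(by omega)) l[k+1]) →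
    Relation.TransGen E (l[0]'(by omega)) (l[t]'ht) := by
  intro t
  induction t with
  | zero => omega
  | succ s ih =>
    intro ht h1 hf
    rcases Nat.eq_zero_or_pos s with hs | hs
    · subst hs
      exact Relation.TransGen.single (hf 0 ht (by omega))
    · exact (ih (by omega) hs (fun k hk hk' => hf k hk (by omega))).tail
        (hf s ht (by omega))

/-- in the DAG with edges `(k, l)` for `k ∈ Ca l`, if `i` is not an
ancestor of `j`, `j` is not a parent of `i`, and `i` is not a parent of `j`, then
`Ca i ∪ Ca j` d-separates `{i}` from `{j}`. -/
theorem stmt9 {V : Type*} [Finite V] (Ca : V → Set V)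
    (acyclic : ∀ v : V, ¬ Relation.TransGen (fun k l => k ∈ Ca l) v v)
    (i j : V) (hne : i ≠ j)
    (hanc : ¬ Relation.TransGen (fun k l => k ∈ Ca l) i j)
    (hji : j ∉ Ca i) (hij : i ∉ Ca j) :
    DSep (fun k l => k ∈ Ca l) {i} {j} (Ca i ∪ Ca j) := by
  classical
  set E : V → V → Prop := fun k l => k ∈ Ca l with hE
  intro u hu v hv l hpath
  rcases hu; rcases hv
  obtain ⟨hnd, hhead, hlast, hchain⟩ := hpath
  have hlen0 : 0 < l.length := by
    cases l with
    | nil => simp at hhead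
    | cons a t => simp
  have hh0 : l[0]? = some i := by rw [← List.head?_eq_getElem?]; exact hhead
  have h0 : l[0]'hlen0 = i := by
    rw [List.getElem?_eq_getElem hlen0] at hh0
    exact Option.some_injective _ hh0
  have hlg : l[l.length - 1]? = some j := by
    rw [← List.getLast?_eq_getElem?]; exact hlast
  have hlen2 : 2 ≤ l.length := by
    by_contra h
    have h1 : l.length - 1 = 0 := by omega
    rw [h1, hh0] at hlg
    exact hne (Option.some_injective _ hlg)
  have hcg := List.isChain_iff_getElem.mp hchain
  have hedge : ∀ t (ht : t + 1 < l.length),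
      E (l[t]'(by omega)) (l[t+1]'ht) ∨ E (l[t+1]'ht) (l[t]'(by omega)) := by
    intro t ht
    simpa using hcg t (by omega)
  have hno2 : ∀ a b : V, E a b → E b a → False := fun a b h1 h2 =>
    acyclic a ((Relation.TransGen.single h1).tail h2)
  -- positions of "backward" edges, in proof-free option form
  set P : ℕ → Prop := fun t => ∃ a b, l[t]? = some a ∧ l[t+1]? = some b ∧ E b a
    with hP
  have hPex : ∃ t, P t := by
    by_contra hnP
    push_neg at hnP
    apply hanc
    have hall : ∀ k (hk : k + 1 < l.length),
        E (l[k]'(by omega)) (l[k+1]'hk) := by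
      intro k hk
      rcases hedge k hk with h | h
      · exact h
      · exact absurd ⟨l[k]'(by omega), l[k+1]'hk,
          List.getElem?_eq_getElem (by omega), List.getElem?_eq_getElem hk, h⟩
          (hnP k)
    have hlt : l.length - 1 < l.length := by omega
    have := fwd E l (l.length - 1) hlt (by omega) (fun k hk _ => hall k hk)
    rw [h0] at this
    rw [List.getElem?_eq_getElem hlt] at hlg
    rwa [Option.some_injective _ hlg] at this
  set t0 := Nat.find hPex with ht0def
  obtain ⟨a, b, hga, hgb, hEba⟩ : P t0 := Nat.find_spec hPex
  have hmin : ∀ t, t < t0 → ∀ (ht : t + 1 < l.length),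
      E (l[t]'(by omega)) (l[t+1]'ht) := by
    intro t hlt ht
    rcases hedge t ht with h | h
    · exact h
    · exact absurd ⟨l[t]'(by omega), l[t+1]'ht,
        List.getElem?_eq_getElem (by omega), List.getElem?_eq_getElem ht, h⟩
        (Nat.find_min hPex hlt)
  have ht1lt : t0 + 1 < l.length := by
    by_contra h
    rw [List.getElem?_eq_none (by omega)] at hgb
    exact Option.some_ne_none _ hgb.symm
  rcases Nat.eq_zero_or_pos t0 with h00 | hpos
  · -- t0 = 0 : edge from l[1] into i; l[1] is a non-collider in Ca i
    rw [h00] at hga hgb ht1lt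
    have ha : a = i := Option.some_injective _ (hga.symm.trans hh0)
    rw [ha] at hEba
    left
    refine ⟨0, b, hgb, ?_, ?_, Or.inl hEba⟩
    · by_contra h
      have h1 : l.length - 1 = 1 := by omega
      rw [h1, hgb] at hlg
      have : b = j := Option.some_injective _ hlg
      exact hji (this ▸ hEba)
    · rintro ⟨a', w', b', ha', hw', hb', hEaw, hEbw⟩
      rw [show a' = i from Option.some_injective _ (ha'.symm.trans hh0),
        show w' = b from Option.some_injective _ (hw'.symm.trans hgb)] at hEaw
      exact hno2 _ _ hEaw hEba
  · -- t0 = s + 1 : collider at a = l[t0], a descendant of i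
    obtain ⟨s, hs⟩ : ∃ s, t0 = s + 1 := ⟨t0 - 1, by omega⟩
    rw [hs] at hga hgb ht1lt
    have hs1 : s + 1 < l.length := by omega
    have haval : l[s+1]'hs1 = a := by
      rw [List.getElem?_eq_getElem hs1] at hga
      exact Option.some_injective _ hga
    have hdesc : Relation.TransGen E i a := by
      have := fwd E l (s + 1) hs1 (by omega)
        (fun k hk hk' => hmin k (by omega) hk)
      rwa [h0, haval] at this
    have hnotK : ∀ d : V, Relation.TransGen E i d → d ∉ Ca i ∪ Ca j := by
      intro d hd hdK
      rcases hdK with hdi | hdj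
      · exact acyclic i (hd.tail hdi)
      · exact hanc (hd.tail hdj)
    right
    refine ⟨s, a, hga, ?_, hnotK _ hdesc, fun d hd => hnotK d (hdesc.trans hd)⟩
    have hfw : E (l[s]'(by omega)) (l[s+1]'hs1) := hmin s (by omega) hs1
    rw [haval] at hfw
    exact ⟨l[s]'(by omega), a, b, List.getElem?_eq_getElem (by omega), hga, hgb,
      hfw, hEba⟩
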